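/- Let T be a bounded operator on a Hilbert space, q ≥ 1, and w a primitive q-th root of unity such that σ_e(T) = w·σ_e(T) and, for all μ ∈ ρ_e(T), ind(T − wμ) = ind(T − μ). If μ ∈ ρ_e(T), then T^q − μ^q = ∏_{k=0}^{q−1} (T − w̄^k μ) is Fredholm and ind(T^q − μ^q) = q · ind(T − μ). -/

import Mathlib

/-- An operator is Fredholm if it has closed range, finite-dimensional kernel
and finite-dimensional cokernel. -/
def IsFredholm {H : Type*} [NormedAddCommGroup H] [InnerProductSpace ℂ H]
    [CompleteSpace H] (T : H →L[ℂ] H) : Prop :=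
  IsClosed (LinearMap.range (T : H →ₗ[ℂ] H) : Set H) ∧
    FiniteDimensional ℂ (LinearMap.ker (T : H →ₗ[ℂ] H)) ∧
    FiniteDimensional ℂ (H ⧸ LinearMap.range (T : H →ₗ[ℂ] H))

/-- The Fredholm index. -/
noncomputable def fredholmInd {H : Type*} [NormedAddCommGroup H]
    [InnerProductSpace ℂ H] [CompleteSpace H] (T : H →L[ℂ] H) : ℤ :=
  (Module.finrank ℂ (LinearMap.ker (T : H →ₗ[ℂ] H)) : ℤ) -
    (Module.finrank ℂ (H ⧸ LinearMap.range (T : H →ₗ[ℂ] H)) : ℤ)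

/-- The essential (Fredholm) spectrum. -/
def essSpectrum {H : Type*} [NormedAddCommGroup H] [InnerProductSpace ℂ H]
    [CompleteSpace H] (T : H →L[ℂ] H) : Set ℂ :=
  {μ : ℂ | ¬ IsFredholm (T - μ • 1)}

open LinearMap Submodule Module Polynomial


lemma fd_of_sub_quot {V : Type*} [AddCommGroup V] [Module ℂ V] (S : Submodule ℂ V)
    (h1 : FiniteDimensional ℂ S) (h2 : FiniteDimensional ℂ (V ⧸ S)) :
    FiniteDimensional ℂ V := by
  have := (isNoetherian_iff_submodule_quotient S).mpr
    ⟨IsNoetherian.iff_fg.2 h1, IsNoetherian.iff_fg.2 h2⟩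
  exact IsNoetherian.iff_fg.1 this

lemma comp_aux {V : Type*} [AddCommGroup V] [Module ℂ V] (f g : V →ₗ[ℂ] V)
    (h1 : FiniteDimensional ℂ (LinearMap.ker f))
    (h2 : FiniteDimensional ℂ (V ⧸ LinearMap.range f))
    (h3 : FiniteDimensional ℂ (LinearMap.ker g))
    (h4 : FiniteDimensional ℂ (V ⧸ LinearMap.range g)) :
    FiniteDimensional ℂ (LinearMap.ker (f ∘ₗ g)) ∧
      FiniteDimensional ℂ (V ⧸ LinearMap.range (f ∘ₗ g)) ∧
      (finrank ℂ (LinearMap.ker (f ∘ₗ g)) : ℤ) - finrank ℂ (V ⧸ LinearMap.range (f ∘ₗ g))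
        = ((finrank ℂ (LinearMap.ker f) : ℤ) - finrank ℂ (V ⧸ LinearMap.range f))
          + ((finrank ℂ (LinearMap.ker g) : ℤ) - finrank ℂ (V ⧸ LinearMap.range g)) := by
  classical
  -- notation
  set d1 := finrank ℂ (LinearMap.ker f)
  set d2 := finrank ℂ (V ⧸ LinearMap.range f)
  set e1 := finrank ℂ (LinearMap.ker g)
  set e2 := finrank ℂ (V ⧸ LinearMap.range g)
  set r := finrank ℂ (LinearMap.range g ⊓ LinearMap.ker f : Submodule ℂ V) with hr
  ---- KERNEL SIDE
  have hgmem : ∀ x ∈ LinearMap.ker (f ∘ₗ g), g x ∈ LinearMap.ker f := by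
    intro x hx
    simpa [LinearMap.mem_ker] using hx
  set φ : LinearMap.ker (f ∘ₗ g) →ₗ[ℂ] LinearMap.ker f := g.restrict hgmem with hφ
  have hkerφ : LinearMap.ker φ = Submodule.comap (LinearMap.ker (f ∘ₗ g)).subtype
      (LinearMap.ker g) := LinearMap.ker_restrict hgmem
  have hkglekfg : LinearMap.ker g ≤ LinearMap.ker (f ∘ₗ g) := by
    intro x hx
    simp [LinearMap.mem_ker, LinearMap.mem_ker.mp hx]
  have ekerφ : LinearMap.ker φ ≃ₗ[ℂ] LinearMap.ker g :=
    hkerφ ▸ Submodule.comapSubtypeEquivOfLe hkglekfg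
  haveI : FiniteDimensional ℂ (LinearMap.ker φ) := ekerφ.symm.finiteDimensional
  haveI : FiniteDimensional ℂ (LinearMap.range φ) := inferInstance
  haveI fdK : FiniteDimensional ℂ (LinearMap.ker (f ∘ₗ g)) := by
    refine fd_of_sub_quot (LinearMap.ker φ) inferInstance ?_
    exact φ.quotKerEquivRange.symm.finiteDimensional
  -- range of φ
  have hmapg : Submodule.map g (LinearMap.ker (f ∘ₗ g))
      = LinearMap.range g ⊓ LinearMap.ker f := by
    apply le_antisymm
    · rintro y ⟨x, hx, rfl⟩
      exact ⟨LinearMap.mem_range_self g x, hgmem x hx⟩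
    · rintro y ⟨⟨x, rfl⟩, hy⟩
      exact ⟨x, by simpa [LinearMap.mem_ker] using hy, rfl⟩
  have hrangeφ : LinearMap.range φ
      = Submodule.comap (LinearMap.ker f).subtype (LinearMap.range g ⊓ LinearMap.ker f) := by
    ext y
    constructor
    · rintro ⟨x, rfl⟩
      exact ⟨⟨(x : V), by simp [hφ, LinearMap.restrict_apply]⟩, by
        simpa using (g.restrict hgmem x).2⟩
    · intro hy
      obtain ⟨⟨x, hgx⟩, hker⟩ := (Submodule.mem_comap.mp hy : _)
      have hx : x ∈ LinearMap.ker (f ∘ₗ g) := by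
        have : f ((LinearMap.ker f).subtype y) = 0 := y.2
        simp only [LinearMap.mem_ker, LinearMap.comp_apply, hgx]
        simpa using this
      exact ⟨⟨x, hx⟩, by
        apply Subtype.ext
        simpa [hφ, LinearMap.restrict_apply] using hgx⟩
  have erangeφ : LinearMap.range φ ≃ₗ[ℂ] (LinearMap.range g ⊓ LinearMap.ker f : Submodule ℂ V) :=
    hrangeφ ▸ Submodule.comapSubtypeEquivOfLe inf_le_right
  have hkdim : finrank ℂ (LinearMap.ker (f ∘ₗ g)) = r + e1 := by
    have := LinearMap.finrank_range_add_finrank_ker φ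
    rw [erangeφ.finrank_eq, ekerφ.finrank_eq] at this
    exact this.symm
  ---- COKERNEL SIDE
  set M := LinearMap.range (f ∘ₗ g) with hM
  have hMmap : M = Submodule.map f (LinearMap.range g) := LinearMap.range_comp g f
  have hMle : M ≤ LinearMap.range f := by
    rw [hMmap]; exact LinearMap.map_le_range
  have hlift : LinearMap.range g ≤ LinearMap.ker (M.mkQ ∘ₗ f) := by
    rintro y ⟨x, rfl⟩
    simp only [LinearMap.mem_ker, LinearMap.comp_apply, Submodule.mkQ_apply,
      Submodule.Quotient.mk_eq_zero]
    exact LinearMap.mem_range_self (f ∘ₗ g) x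
  set ψ : (V ⧸ LinearMap.range g) →ₗ[ℂ] (V ⧸ M) := (LinearMap.range g).liftQ (M.mkQ ∘ₗ f) hlift
    with hψ
  -- θ : ker f → V ⧸ range g
  set θ : LinearMap.ker f →ₗ[ℂ] (V ⧸ LinearMap.range g) :=
    (LinearMap.range g).mkQ ∘ₗ (LinearMap.ker f).subtype with hθ
  have hkerθ : LinearMap.ker θ = Submodule.comap (LinearMap.ker f).subtype
      (LinearMap.range g ⊓ LinearMap.ker f) := by
    rw [hθ, LinearMap.ker_comp, Submodule.ker_mkQ]
    ext x
    simp [Submodule.mem_comap, x.2]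
  have ekerθ : LinearMap.ker θ ≃ₗ[ℂ] (LinearMap.range g ⊓ LinearMap.ker f : Submodule ℂ V) :=
    hkerθ ▸ Submodule.comapSubtypeEquivOfLe inf_le_right
  have hrangeθ : LinearMap.range θ = Submodule.map (LinearMap.range g).mkQ (LinearMap.ker f) := by
    rw [hθ, LinearMap.range_comp, Submodule.range_subtype]
  -- ker ψ = map mkQ (ker f)
  have hkerψ : LinearMap.ker ψ = Submodule.map (LinearMap.range g).mkQ (LinearMap.ker f) := by
    rw [hψ, Submodule.ker_liftQ, LinearMap.ker_comp, Submodule.ker_mkQ, hMmap,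
      Submodule.comap_map_eq, Submodule.map_sup]
    have hb : Submodule.map (LinearMap.range g).mkQ (LinearMap.range g) = ⊥ := by
      apply le_bot_iff.mp
      rintro y ⟨x, hx, rfl⟩
      simpa [Submodule.mkQ_apply, Submodule.Quotient.mk_eq_zero] using hx
    rw [hb, bot_sup_eq]
  haveI fdkerψ : FiniteDimensional ℂ (LinearMap.ker ψ) := inferInstance
  have hkerψdim : (finrank ℂ (LinearMap.ker ψ) : ℤ) = d1 - r := by
    have hrn := LinearMap.finrank_range_add_finrank_ker θ
    rw [ekerθ.finrank_eq] at hrn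
    have : finrank ℂ (LinearMap.range θ) = finrank ℂ (LinearMap.ker ψ) := by
      rw [hrangeθ, hkerψ]
    rw [this] at hrn
    -- hrn : finrank (ker ψ) + r = d1
    omega
  -- range ψ and the quotient equivalence
  set W := LinearMap.range ψ with hW
  have hWeq : W = Submodule.map M.mkQ (LinearMap.range f) := by
    rw [hW, hψ, Submodule.range_liftQ, LinearMap.range_comp]
  haveI fdW : FiniteDimensional ℂ W := inferInstance
  have equot : ((V ⧸ M) ⧸ W) ≃ₗ[ℂ] (V ⧸ LinearMap.range f) := by
    rw [hWeq]
    exact Submodule.quotientQuotientEquivQuotient M (LinearMap.range f) hMle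
  haveI : FiniteDimensional ℂ ((V ⧸ M) ⧸ W) := equot.symm.finiteDimensional
  haveI fdC : FiniteDimensional ℂ (V ⧸ M) := fd_of_sub_quot W inferInstance inferInstance
  -- dimension counts
  have hquotdim : finrank ℂ (V ⧸ M) = finrank ℂ ((V ⧸ M) ⧸ W) + finrank ℂ W :=
    (Submodule.finrank_quotient_add_finrank W).symm
  have h2' : finrank ℂ ((V ⧸ M) ⧸ W) = d2 := equot.finrank_eq
  have hrnψ : finrank ℂ W + finrank ℂ (LinearMap.ker ψ) = e2 :=
    LinearMap.finrank_range_add_finrank_ker ψ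
  refine ⟨fdK, fdC, ?_⟩
  have hkd : finrank ℂ (LinearMap.ker (f ∘ₗ g)) = r + e1 := hkdim
  rw [show LinearMap.range (f ∘ₗ g) = M from rfl] at *
  omega

lemma isClosed_range_of_fd_coker {H : Type*} [NormedAddCommGroup H] [InnerProductSpace ℂ H]
    [CompleteSpace H] (A : H →L[ℂ] H) (h : FiniteDimensional ℂ (H ⧸ LinearMap.range (A : H →ₗ[ℂ] H))) :
    IsClosed (LinearMap.range (A : H →ₗ[ℂ] H) : Set H) := by
  classical
  obtain ⟨F, hF⟩ := Submodule.exists_isCompl (LinearMap.range (A : H →ₗ[ℂ] H))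
  haveI hFfd : FiniteDimensional ℂ F := (Submodule.quotientEquivOfIsCompl _ _ hF).finiteDimensional
  set K : Submodule ℂ H := (LinearMap.ker (A : H →ₗ[ℂ] H))ᗮ with hK
  haveI : CompleteSpace (LinearMap.ker (A : H →ₗ[ℂ] H)) :=
    (ContinuousLinearMap.isClosed_ker A).completeSpace_coe
  haveI : CompleteSpace K := (Submodule.isClosed_orthogonal _).completeSpace_coe
  haveI : CompleteSpace F := FiniteDimensional.complete ℂ F
  have hcompl : IsCompl (LinearMap.ker (A : H →ₗ[ℂ] H)) K := Submodule.isCompl_orthogonal_of_hasOrthogonalProjection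
  -- the map B
  set B : (K × F) →L[ℂ] H :=
    (A.comp K.subtypeL).comp (ContinuousLinearMap.fst ℂ K F)
      + F.subtypeL.comp (ContinuousLinearMap.snd ℂ K F) with hB
  have hBapp : ∀ x : K × F, B x = A (x.1 : H) + (x.2 : H) := fun x => rfl
  have hinj : LinearMap.ker (B : (K × F) →ₗ[ℂ] H) = ⊥ := by
    rw [LinearMap.ker_eq_bot']
    rintro ⟨x, f⟩ hxf
    rw [ContinuousLinearMap.coe_coe, hBapp] at hxf
    have hf : (f : H) ∈ LinearMap.range (A : H →ₗ[ℂ] H) ⊓ F := by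
      constructor
      · exact ⟨-(x : H), by rw [map_neg, eq_neg_of_add_eq_zero_right hxf]; rfl⟩
      · exact f.2
    rw [hF.inf_eq_bot] at hf
    have hf0 : (f : H) = 0 := hf
    have hx : A (x : H) = 0 := by
      have := hxf; rw [hf0, add_zero] at this; exact this
    have hxk : (x : H) ∈ LinearMap.ker (A : H →ₗ[ℂ] H) ⊓ K := ⟨hx, x.2⟩
    rw [hcompl.inf_eq_bot] at hxk
    exact Prod.ext (Subtype.ext hxk) (Subtype.ext hf0)
  have hAK : ∀ v ∈ LinearMap.range (A : H →ₗ[ℂ] H), ∃ k : K, A (k : H) = v := by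
    rintro v ⟨x, rfl⟩
    obtain ⟨n, hn, k, hk, hnk⟩ :=
      Submodule.mem_sup.mp (by rw [hcompl.sup_eq_top]; trivial : x ∈ LinearMap.ker (A : H →ₗ[ℂ] H) ⊔ K)
    exact ⟨⟨k, hk⟩, by rw [← hnk, map_add, LinearMap.mem_ker.mp hn, zero_add]; rfl⟩
  have hsurj : LinearMap.range (B : (K × F) →ₗ[ℂ] H) = ⊤ := by
    rw [LinearMap.range_eq_top]
    intro v
    obtain ⟨a, ha, f, hf, hav⟩ :=
      Submodule.mem_sup.mp (by rw [hF.sup_eq_top]; trivial : v ∈ LinearMap.range (A : H →ₗ[ℂ] H) ⊔ F)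
    obtain ⟨k, hk⟩ := hAK a ha
    exact ⟨(k, ⟨f, hf⟩), by rw [ContinuousLinearMap.coe_coe, hBapp]; simp [hk, hav]⟩
  let e : (K × F) ≃L[ℂ] H := ContinuousLinearEquiv.ofBijective B hinj hsurj
  have heq : (LinearMap.range (A : H →ₗ[ℂ] H) : Set H) = e '' ((Set.univ : Set K) ×ˢ ({0} : Set F)) := by
    ext v
    constructor
    · intro hv
      obtain ⟨k, hk⟩ := hAK v hv
      exact ⟨(k, 0), ⟨trivial, rfl⟩, by
        show B (k, 0) = v
        rw [hBapp]; simpa using hk⟩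
    · rintro ⟨⟨k, f⟩, ⟨-, hf⟩, rfl⟩
      have hf0 : f = 0 := hf
      show B (k, f) ∈ _
      rw [hBapp, hf0]
      simpa using LinearMap.mem_range_self (A : H →ₗ[ℂ] H) (k : H)
  rw [heq]
  exact (e.toHomeomorph.isClosedMap) _ (isClosed_univ.prod isClosed_singleton)


section Wrapper
variable {H : Type*} [NormedAddCommGroup H] [InnerProductSpace ℂ H] [CompleteSpace H]

lemma ker_mul_eq (S T : H →L[ℂ] H) :
    LinearMap.ker ((S * T : H →L[ℂ] H) : H →ₗ[ℂ] H) = LinearMap.ker ((S : H →ₗ[ℂ] H) ∘ₗ (T : H →ₗ[ℂ] H)) := rfl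

lemma range_mul_eq (S T : H →L[ℂ] H) :
    LinearMap.range ((S * T : H →L[ℂ] H) : H →ₗ[ℂ] H) = LinearMap.range ((S : H →ₗ[ℂ] H) ∘ₗ (T : H →ₗ[ℂ] H)) := rfl

lemma isFredholm_mul {S T : H →L[ℂ] H} (hS : IsFredholm S) (hT : IsFredholm T) :
    IsFredholm (S * T) ∧ fredholmInd (S * T) = fredholmInd S + fredholmInd T := by
  obtain ⟨-, hS1, hS2⟩ := hS
  obtain ⟨-, hT1, hT2⟩ := hT
  obtain ⟨F1, F2, F3⟩ := comp_aux (S : H →ₗ[ℂ] H) (T : H →ₗ[ℂ] H) hS1 hS2 hT1 hT2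
  have hker := ker_mul_eq S T
  have hrange := range_mul_eq S T
  have hFk : FiniteDimensional ℂ (LinearMap.ker ((S * T : H →L[ℂ] H) : H →ₗ[ℂ] H)) := hker ▸ F1
  have hFc : FiniteDimensional ℂ (H ⧸ LinearMap.range ((S * T : H →L[ℂ] H) : H →ₗ[ℂ] H)) := hrange ▸ F2
  refine ⟨⟨isClosed_range_of_fd_coker _ hFc, hFk, hFc⟩, ?_⟩
  show (finrank ℂ (LinearMap.ker ((S * T : H →L[ℂ] H) : H →ₗ[ℂ] H)) : ℤ) - finrank ℂ (H ⧸ LinearMap.range ((S * T : H →L[ℂ] H) : H →ₗ[ℂ] H)) = _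
  rw [hker, hrange]
  exact F3

lemma isFredholm_one : IsFredholm (1 : H →L[ℂ] H) ∧ fredholmInd (1 : H →L[ℂ] H) = 0 := by
  have hker : LinearMap.ker ((1 : H →L[ℂ] H) : H →ₗ[ℂ] H) = ⊥ := by
    ext x; simp [LinearMap.mem_ker, ContinuousLinearMap.one_apply]
  have hrange : LinearMap.range ((1 : H →L[ℂ] H) : H →ₗ[ℂ] H) = ⊤ := by
    ext x; simpa [LinearMap.mem_range] using ⟨x, rfl⟩
  haveI h1 : FiniteDimensional ℂ (LinearMap.ker ((1 : H →L[ℂ] H) : H →ₗ[ℂ] H)) := by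
    rw [hker]; infer_instance
  haveI h2' : Subsingleton (H ⧸ LinearMap.range ((1 : H →L[ℂ] H) : H →ₗ[ℂ] H)) :=
    Submodule.Quotient.subsingleton_iff.mpr hrange
  haveI h2 : FiniteDimensional ℂ (H ⧸ LinearMap.range ((1 : H →L[ℂ] H) : H →ₗ[ℂ] H)) :=
    Module.Finite.of_surjective (0 : ℂ →ₗ[ℂ] _) (fun x => ⟨0, Subsingleton.elim _ _⟩)
  refine ⟨⟨?_, h1, h2⟩, ?_⟩
  · rw [hrange]; simpa using isClosed_univ
  · show (finrank ℂ (LinearMap.ker ((1:H →L[ℂ] H) : H →ₗ[ℂ] H)) : ℤ) - _ = 0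
    rw [hker]
    rw [finrank_bot, finrank_zero_of_subsingleton]
    simp

end Wrapper


/-- If `σ_e(T)` is invariant under multiplication by a primitive
`q`-th root of unity `w` with matching indices on the essential resolvent, then
for `μ ∈ ρ_e(T)` the operator `T^q − μ^q` is Fredholm with index
`q · ind(T − μ)`. -/
theorem index_of_power_of_lambda_toeplitz
    {H : Type*} [NormedAddCommGroup H] [InnerProductSpace ℂ H] [CompleteSpace H]
    (T : H →L[ℂ] H)
    (q : ℕ) (hq : 1 ≤ q) (w : ℂ) (hwq : w ^ q = 1)
    (hprim : ∀ n : ℕ, 0 < n → n < q → w ^ n ≠ 1)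
    (hσ : essSpectrum T = (fun z : ℂ => w * z) '' essSpectrum T)
    (hind : ∀ μ : ℂ, μ ∉ essSpectrum T →
      fredholmInd (T - (w * μ) • 1) = fredholmInd (T - μ • 1))
    (μ : ℂ) (hμ : μ ∉ essSpectrum T) :
    T ^ q - μ ^ q • 1 = ((List.range q).map (fun k => T - ((starRingEnd ℂ) w ^ k * μ) • 1)).prod ∧
      IsFredholm (T ^ q - μ ^ q • 1) ∧
      fredholmInd (T ^ q - μ ^ q • 1) = q * fredholmInd (T - μ • 1) := by
  have hq0 : 0 < q := hq
  -- w is a primitive q-th root of unity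
  have hw : IsPrimitiveRoot w q := by
    refine ⟨hwq, fun l hl => ?_⟩
    have hmod : w ^ (l % q) = 1 := by
      conv at hl => rw [← Nat.div_add_mod l q]
      rwa [pow_add, pow_mul, hwq, one_pow, one_mul] at hl
    rcases Nat.eq_zero_or_pos (l % q) with h0 | h0
    · exact Nat.dvd_of_mod_eq_zero h0
    · exact absurd hmod (hprim _ h0 (Nat.mod_lt l hq0))
  have hwc : IsPrimitiveRoot ((starRingEnd ℂ) w) q := by
    refine ⟨by rw [← map_pow, hwq, map_one], fun l hl => ?_⟩
    refine hw.dvd_of_pow_eq_one l ?_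
    have := congrArg (starRingEnd ℂ) hl
    simpa [← map_pow] using this
  -- conj w = w ^ (q - 1)
  have hconj : (starRingEnd ℂ) w = w ^ (q - 1) := by
    have h1 : ‖w‖ ^ q = 1 ^ q := by rw [← norm_pow, hwq, norm_one, one_pow]
    have h2 : ‖w‖ = 1 :=
      (pow_left_inj₀ (norm_nonneg w) zero_le_one hq0.ne').mp h1
    have h3 : (starRingEnd ℂ) w = w⁻¹ := (Complex.inv_eq_conj h2).symm
    rw [h3]
    apply inv_eq_of_mul_eq_one_right
    rw [← pow_succ', Nat.sub_add_cancel hq]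
    exact hwq
  -- essential spectrum invariance
  have hmem : ∀ z : ℂ, z ∉ essSpectrum T → w * z ∉ essSpectrum T := by
    intro z hz hin
    rw [hσ] at hin
    obtain ⟨z', hz', hzz⟩ := hin
    have hw0 : w ≠ 0 := by
      intro h
      rw [h, zero_pow hq0.ne'] at hwq
      exact zero_ne_one hwq
    have : z' = z := by
      field_simp at hzz
      exact hzz
    exact hz (this ▸ hz')
  have key : ∀ m : ℕ, (w ^ m * μ) ∉ essSpectrum T ∧
      fredholmInd (T - (w ^ m * μ) • 1) = fredholmInd (T - μ • 1) := by
    intro m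
    induction m with
    | zero => simpa using hμ
    | succ n ih =>
      have h1 : w ^ (n + 1) * μ = w * (w ^ n * μ) := by ring
      rw [h1]
      exact ⟨hmem _ ih.1, (hind _ ih.1).trans ih.2⟩
  have hfac : ∀ k : ℕ, ((starRingEnd ℂ) w ^ k * μ) ∉ essSpectrum T ∧
      fredholmInd (T - ((starRingEnd ℂ) w ^ k * μ) • 1) = fredholmInd (T - μ • 1) := by
    intro k
    rw [hconj, ← pow_mul]
    exact key _
  -- the polynomial factorization
  have hset : Polynomial.nthRootsFinset q (1 : ℂ) = (Finset.range q).image ((starRingEnd ℂ) w ^ ·) := by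
    symm
    apply Finset.eq_of_subset_of_card_le
    · intro x hx
      obtain ⟨k, hk, rfl⟩ := Finset.mem_image.mp hx
      refine (Polynomial.mem_nthRootsFinset hq0 (1 : ℂ)).mpr ?_
      rw [← pow_mul, mul_comm, pow_mul, hwc.pow_eq_one, one_pow]
    · rw [hwc.card_nthRootsFinset, Finset.card_image_of_injOn, Finset.card_range]
      intro i hi j hj hij
      exact hwc.pow_inj (Finset.mem_range.mp hi) (Finset.mem_range.mp hj) hij
  have hinjOn : Set.InjOn ((starRingEnd ℂ) w ^ ·) (Finset.range q) := by
    intro i hi j hj hij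
    exact hwc.pow_inj (Finset.mem_range.mp hi) (Finset.mem_range.mp hj) hij
  have hpoly : (((List.range q).map (fun k => (X : ℂ[X]) - C ((starRingEnd ℂ) w ^ k * μ))).prod)
      = X ^ q - C (μ ^ q) := by
    have hlist : (((List.range q).map (fun k => (X : ℂ[X]) - C ((starRingEnd ℂ) w ^ k * μ))).prod)
        = ∏ k ∈ Finset.range q, ((X : ℂ[X]) - C ((starRingEnd ℂ) w ^ k * μ)) := rfl
    rw [hlist]
    apply Polynomial.funext
    intro x
    rw [eval_prod]
    simp only [eval_sub, eval_X, eval_C, eval_pow]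
    rw [show (x : ℂ) ^ q - μ ^ q = ∏ ζ ∈ Polynomial.nthRootsFinset q (1 : ℂ), (x - ζ * μ) from
      hwc.pow_sub_pow_eq_prod_sub_mul x μ hq0, hset, Finset.prod_image hinjOn]
  have hfact : T ^ q - μ ^ q • 1
      = ((List.range q).map (fun k => T - ((starRingEnd ℂ) w ^ k * μ) • 1)).prod := by
    have h := congrArg (aeval T) hpoly
    rw [map_list_prod, List.map_map] at h
    have hL : (List.range q).map ((aeval T) ∘ fun k => (X : ℂ[X]) - C ((starRingEnd ℂ) w ^ k * μ))
        = (List.range q).map (fun k => T - ((starRingEnd ℂ) w ^ k * μ) • 1) := by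
      apply List.map_congr_left
      intro k _
      show aeval T ((X : ℂ[X]) - C ((starRingEnd ℂ) w ^ k * μ)) = _
      rw [map_sub, aeval_X, aeval_C, Algebra.algebraMap_eq_smul_one]
    have hR : aeval T ((X : ℂ[X]) ^ q - C (μ ^ q)) = T ^ q - μ ^ q • 1 := by
      rw [map_sub, map_pow, aeval_X, aeval_C, Algebra.algebraMap_eq_smul_one]
    rw [hL, hR] at h
    exact h.symm
  -- induction on partial products
  have main : ∀ n : ℕ,
      IsFredholm (((List.range n).map (fun k => T - ((starRingEnd ℂ) w ^ k * μ) • 1)).prod) ∧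
      fredholmInd (((List.range n).map (fun k => T - ((starRingEnd ℂ) w ^ k * μ) • 1)).prod)
        = n * fredholmInd (T - μ • 1) := by
    intro n
    induction n with
    | zero =>
      simp only [List.range_zero, List.map_nil, List.prod_nil, Nat.cast_zero, zero_mul]
      exact isFredholm_one
    | succ n ih =>
      rw [List.range_succ, List.map_append, List.prod_append, List.map_singleton,
        List.prod_singleton]
      have hfred : IsFredholm (T - ((starRingEnd ℂ) w ^ n * μ) • 1) := by
        have h := (hfac n).1
        simp only [essSpectrum, Set.mem_setOf_eq, not_not] at h
        exact h
      obtain ⟨h1, h2⟩ := isFredholm_mul ih.1 hfred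
      refine ⟨h1, ?_⟩
      rw [h2, ih.2, (hfac n).2]
      push_cast
      ring
  refine ⟨hfact, ?_, ?_⟩
  · rw [hfact]; exact (main q).1
  · rw [hfact, (main q).2]
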